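/- For every p ∈ (0,1) and s ∈ [-1,1], writing q = 1-p, one has p(1+s)² log((1+s)²) + q(1-s)² log((1-s)²) - (p(1+s)² + q(1-s)²) log(p(1+s)² + q(1-s)²) ≤ 2s². -/

import Mathlib

open Real

set_option maxHeartbeats 2000000

lemma log_cubic_bound {x : ℝ} (hx : -1 < x) :
    Real.log (1+x) ≤ x - x^2/2 + x^3/(3+2*x) := by
  set f : ℝ → ℝ := fun y => y - y^2/2 + y^3/(3+2*y) - Real.log (1+y) with hf
  have hderiv : ∀ y ∈ Set.Ioi (-1:ℝ), HasDerivAt f (y^3/((1+y)*(3+2*y)^2)) y := by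
    intro y hy
    have hy0 : (-1:ℝ) < y := hy
    have hy1 : (0:ℝ) < 1 + y := by linarith
    have hy2 : (3:ℝ) + 2*y ≠ 0 := by nlinarith
    have h1 : HasDerivAt (fun y : ℝ => y - y^2/2) (1 - 2*y^1/2) y :=
      (hasDerivAt_id y).sub ((hasDerivAt_pow 2 y).div_const 2)
    have hden : HasDerivAt (fun y : ℝ => 3 + 2*y) 2 y := by
      simpa using ((hasDerivAt_id y).const_mul (2:ℝ)).const_add (3:ℝ)
    have h2 : HasDerivAt (fun y : ℝ => y^3/(3+2*y))
        ((3*y^2*(3+2*y) - y^3*2)/(3+2*y)^2) y := by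
      simpa using (hasDerivAt_pow 3 y).fun_div hden hy2
    have h3 : HasDerivAt (fun y : ℝ => Real.log (1+y)) (1/(1+y)) y := by
      have : HasDerivAt (fun y : ℝ => 1 + y) 1 y := by
        simpa using (hasDerivAt_id y).const_add (1:ℝ)
      simpa [Function.comp_def] using (Real.hasDerivAt_log (ne_of_gt hy1)).comp y this
    have := (h1.fun_add h2).fun_sub h3
    refine this.congr_deriv ?_
    field_simp
    ring
  have hcont : ContinuousOn f (Set.Ici (0:ℝ)) := by
    intro y hy
    exact ((hderiv y (by simp at hy ⊢; linarith)).continuousAt).continuousWithinAt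
  have hcont2 : ContinuousOn f (Set.Ioc (-1:ℝ) 0) := by
    intro y hy
    exact ((hderiv y (by simp at hy ⊢; linarith [hy.1])).continuousAt).continuousWithinAt
  have hmono : MonotoneOn f (Set.Ici (0:ℝ)) := by
    apply monotoneOn_of_deriv_nonneg (convex_Ici 0) hcont
    · intro y hy
      rw [interior_Ici] at hy
      exact (hderiv y (by simp at hy ⊢; linarith)).differentiableAt.differentiableWithinAt
    · intro y hy
      rw [interior_Ici] at hy
      have hy0 : (0:ℝ) < y := hy
      rw [(hderiv y (by simp; linarith)).deriv]
      positivity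
  have hanti : AntitoneOn f (Set.Ioc (-1:ℝ) 0) := by
    apply antitoneOn_of_deriv_nonpos (convex_Ioc (-1) 0) hcont2
    · intro y hy
      rw [interior_Ioc] at hy
      exact (hderiv y (by simp at hy ⊢; linarith [hy.1])).differentiableAt.differentiableWithinAt
    · intro y hy
      rw [interior_Ioc] at hy
      obtain ⟨hya, hyb⟩ := hy
      rw [(hderiv y (by simp; linarith)).deriv]
      apply div_nonpos_of_nonpos_of_nonneg
      · nlinarith [sq_nonneg y]
      · nlinarith [sq_nonneg (2+y)]
  have hf0 : f 0 = 0 := by simp [hf]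
  have key : 0 ≤ f x := by
    rcases le_or_gt 0 x with h | h
    · rw [← hf0]; exact hmono (by simp) (by simpa using h) h
    · rw [← hf0]
      exact hanti (Set.mem_Ioc.mpr ⟨hx, le_of_lt h⟩) (by simp) (le_of_lt h)
  have : 0 ≤ x - x^2/2 + x^3/(3+2*x) - Real.log (1+x) := key
  linarith

lemma xlog_bound {X m : ℝ} (hX : 0 ≤ X) (hm : 0 < m) :
    X * Real.log X - X * Real.log m ≤
      X*(X-m)/m - X*(X-m)^2/(2*m^2) + X*(X-m)^3/(m^2*(m+2*X)) := by
  rcases eq_or_lt_of_le hX with h0 | hX0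
  · simp [← h0]
  · have hx : (-1:ℝ) < (X-m)/m := by
      rw [lt_div_iff₀ hm]; linarith
    have hlog := log_cubic_bound hx
    have h1x : 1 + (X-m)/m = X/m := by field_simp; ring
    rw [h1x, Real.log_div (ne_of_gt hX0) (ne_of_gt hm)] at hlog
    have hb : ((X-m)/m) - ((X-m)/m)^2/2 + ((X-m)/m)^3/(3+2*((X-m)/m))
        = (X-m)/m - (X-m)^2/(2*m^2) + (X-m)^3/(m^2*(m+2*X)) := by
      have hmX : (0:ℝ) < m + 2*X := by linarith
      rw [show (3+2*((X-m)/m)) = (m+2*X)/m by field_simp; ring]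
      field_simp [hm.ne', hmX.ne']
    rw [hb] at hlog
    have := mul_le_mul_of_nonneg_left hlog hX
    calc X * Real.log X - X * Real.log m = X * (Real.log X - Real.log m) := by ring
    _ ≤ X * ((X-m)/m - (X-m)^2/(2*m^2) + (X-m)^3/(m^2*(m+2*X))) := this
    _ = X*(X-m)/m - X*(X-m)^2/(2*m^2) + X*(X-m)^3/(m^2*(m+2*X)) := by ring

lemma Qneg {r s : ℝ} (hr : 0 ≤ r) (hr' : r ≤ 1) (hs : 0 ≤ s) (hs' : s ≤ 1) :
    0 ≤ 2*s^2 - 12*r*s + 18*r^2 + 6*s^4 - 24*r*s^3 + 78*r^2*s^2 - 84*r^3*s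
      + 22*s^6 - 76*r*s^5 + 126*r^2*s^4 - 184*r^3*s^3 + 136*r^4*s^2
      + 18*s^8 - 96*r*s^7 + 194*r^2*s^6 - 212*r^3*s^5 + 168*r^4*s^4 - 80*r^5*s^3 := by
  have hr1 : (0:ℝ) ≤ 1 - r := by linarith
  have hs1 : (0:ℝ) ≤ 1 - s := by linarith
  linarith [mul_nonneg (mul_nonneg (sq_nonneg (s-2*r)) (pow_nonneg hs 2)) (pow_nonneg hr1 5),
    mul_nonneg (mul_nonneg (sq_nonneg (s-2*r)) (pow_nonneg hs 2)) (pow_nonneg hs1 6),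
    mul_nonneg (mul_nonneg (sq_nonneg (s-2*r)) (pow_nonneg hs 4)) (pow_nonneg hr1 3),
    mul_nonneg (sq_nonneg (s-3*r)) (pow_nonneg hr1 3),
    mul_nonneg (mul_nonneg (sq_nonneg (s-3*r)) (pow_nonneg hr1 2)) (pow_nonneg hs1 2),
    mul_nonneg (sq_nonneg (s-3*r)) (pow_nonneg hs1 7),
    mul_nonneg (mul_nonneg (sq_nonneg (s-3*r)) (pow_nonneg hr 1)) (pow_nonneg hr1 4),
    mul_nonneg (mul_nonneg (sq_nonneg (s-3*r)) (pow_nonneg hr 1)) (pow_nonneg hr1 6),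
    mul_nonneg (mul_nonneg (sq_nonneg (s-3*r)) (pow_nonneg hr 1)) (pow_nonneg hs1 7),
    mul_nonneg (mul_nonneg (sq_nonneg (s-3*r)) (pow_nonneg hs 1)) (pow_nonneg hr1 7),
    mul_nonneg (mul_nonneg (mul_nonneg (sq_nonneg (s-3*r)) (pow_nonneg hs 1)) (pow_nonneg hr1 6)) (pow_nonneg hs1 1),
    mul_nonneg (mul_nonneg (sq_nonneg (s-3*r)) (pow_nonneg hs 1)) (pow_nonneg hs1 6),
    mul_nonneg (mul_nonneg (sq_nonneg (s-4*r)) (pow_nonneg hr 2)) (pow_nonneg hr1 3),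
    mul_nonneg (mul_nonneg (sq_nonneg (s-4*r)) (pow_nonneg hr 2)) (pow_nonneg hr1 6),
    mul_nonneg (mul_nonneg (mul_nonneg (sq_nonneg (s-4*r)) (pow_nonneg hr 2)) (pow_nonneg hr1 4)) (pow_nonneg hs1 2),
    mul_nonneg (mul_nonneg (mul_nonneg (sq_nonneg (s-4*r)) (pow_nonneg hr 2)) (pow_nonneg hr1 3)) (pow_nonneg hs1 2),
    mul_nonneg (mul_nonneg (mul_nonneg (sq_nonneg (s-4*r)) (pow_nonneg hr 2)) (pow_nonneg hr1 2)) (pow_nonneg hs1 2),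
    mul_nonneg (mul_nonneg (mul_nonneg (sq_nonneg (s-4*r)) (pow_nonneg hr 2)) (pow_nonneg hr1 1)) (pow_nonneg hs1 4),
    mul_nonneg (mul_nonneg (sq_nonneg (s-4*r)) (pow_nonneg hr 2)) (pow_nonneg hs1 6),
    mul_nonneg (mul_nonneg (mul_nonneg (sq_nonneg (s-4*r)) (pow_nonneg hr 3)) (pow_nonneg hr1 1)) (pow_nonneg hs1 4),
    mul_nonneg (mul_nonneg (mul_nonneg (sq_nonneg (s-4*r)) (pow_nonneg hr 4)) (pow_nonneg hr1 3)) (pow_nonneg hs1 1),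
    mul_nonneg (mul_nonneg (sq_nonneg (s-4*r)) (pow_nonneg hr 5)) (pow_nonneg hr1 3),
    mul_nonneg (mul_nonneg (mul_nonneg (sq_nonneg (s-4*r)) (pow_nonneg hr 3)) (pow_nonneg hs 2)) (pow_nonneg hr1 3),
    mul_nonneg (mul_nonneg (mul_nonneg (mul_nonneg (sq_nonneg (s-4*r)) (pow_nonneg hr 2)) (pow_nonneg hs 1)) (pow_nonneg hr1 3)) (pow_nonneg hs1 2),
    mul_nonneg (mul_nonneg (mul_nonneg (mul_nonneg (sq_nonneg (s-4*r)) (pow_nonneg hr 2)) (pow_nonneg hs 1)) (pow_nonneg hr1 1)) (pow_nonneg hs1 4),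
    mul_nonneg (mul_nonneg (mul_nonneg (mul_nonneg (sq_nonneg (s-4*r)) (pow_nonneg hr 2)) (pow_nonneg hs 2)) (pow_nonneg hr1 2)) (pow_nonneg hs1 2),
    mul_nonneg (mul_nonneg (mul_nonneg (sq_nonneg (s-4*r)) (pow_nonneg hr 1)) (pow_nonneg hs 1)) (pow_nonneg hs1 6),
    mul_nonneg (mul_nonneg (mul_nonneg (mul_nonneg (sq_nonneg (s-4*r)) (pow_nonneg hr 1)) (pow_nonneg hs 2)) (pow_nonneg hr1 1)) (pow_nonneg hs1 4),
    mul_nonneg (mul_nonneg (mul_nonneg (mul_nonneg (sq_nonneg (s-4*r)) (pow_nonneg hr 1)) (pow_nonneg hs 3)) (pow_nonneg hr1 2)) (pow_nonneg hs1 2),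
    mul_nonneg (mul_nonneg (mul_nonneg (sq_nonneg (s-4*r)) (pow_nonneg hr 1)) (pow_nonneg hs 4)) (pow_nonneg hr1 3),
    mul_nonneg (mul_nonneg (sq_nonneg (s-4*r)) (pow_nonneg hs 2)) (pow_nonneg hr1 4),
    mul_nonneg (mul_nonneg (sq_nonneg (s-4*r)) (pow_nonneg hs 2)) (pow_nonneg hs1 6),
    mul_nonneg (mul_nonneg (sq_nonneg (s-4*r)) (pow_nonneg hs 3)) (pow_nonneg hr1 3),
    mul_nonneg (mul_nonneg (mul_nonneg (sq_nonneg (s-4*r)) (pow_nonneg hs 3)) (pow_nonneg hr1 1)) (pow_nonneg hs1 4),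
    mul_nonneg (mul_nonneg (mul_nonneg (sq_nonneg (s-4*r)) (pow_nonneg hs 4)) (pow_nonneg hr1 2)) (pow_nonneg hs1 2),
    mul_nonneg (mul_nonneg (sq_nonneg (s-4*r)) (pow_nonneg hs 5)) (pow_nonneg hr1 3),
    mul_nonneg (mul_nonneg (mul_nonneg (sq_nonneg (s-r)) (pow_nonneg hr 1)) (pow_nonneg hs 3)) (pow_nonneg hs1 4),
    mul_nonneg (mul_nonneg (mul_nonneg (mul_nonneg (sq_nonneg (s-r)) (pow_nonneg hr 1)) (pow_nonneg hs 4)) (pow_nonneg hr1 1)) (pow_nonneg hs1 2),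
    mul_nonneg (mul_nonneg (mul_nonneg (sq_nonneg (s-r)) (pow_nonneg hr 1)) (pow_nonneg hs 5)) (pow_nonneg hr1 2),
    mul_nonneg (mul_nonneg (mul_nonneg (sq_nonneg (s-r)) (pow_nonneg hs 2)) (pow_nonneg hr1 1)) (pow_nonneg hs1 2),
    mul_nonneg (mul_nonneg (sq_nonneg (s-r)) (pow_nonneg hs 3)) (pow_nonneg hs1 5),
    mul_nonneg (mul_nonneg (mul_nonneg (sq_nonneg (s-r)) (pow_nonneg hs 4)) (pow_nonneg hr1 1)) (pow_nonneg hs1 2),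
    mul_nonneg (mul_nonneg (mul_nonneg (sq_nonneg (s-r)) (pow_nonneg hs 4)) (pow_nonneg hr1 1)) (pow_nonneg hs1 3),
    mul_nonneg (mul_nonneg (sq_nonneg (s-r)) (pow_nonneg hs 6)) (pow_nonneg hr1 2),
    mul_nonneg (mul_nonneg (pow_nonneg hs 4) (pow_nonneg hr1 1)) (pow_nonneg hs1 5),
    mul_nonneg (mul_nonneg (pow_nonneg hs 5) (pow_nonneg hr1 1)) (pow_nonneg hs1 4),
    mul_nonneg (pow_nonneg hs 6) (pow_nonneg hr1 4)]

lemma Qt_nonneg {t s : ℝ} (ht : -1 ≤ t) (ht' : t ≤ 1) (hs : -1 ≤ s) (hs' : s ≤ 1) :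
    0 ≤ 2*s^2 + 12*t*s + 18*t^2 + 6*s^4 + 24*t*s^3 + 78*t^2*s^2 + 84*t^3*s
      + 22*s^6 + 76*t*s^5 + 126*t^2*s^4 + 184*t^3*s^3 + 136*t^4*s^2
      + 18*s^8 + 96*t*s^7 + 194*t^2*s^6 + 212*t^3*s^5 + 168*t^4*s^4 + 80*t^5*s^3 := by
  rcases le_or_gt 0 (t*s) with hts | hts
  · have h3 : 0 ≤ (t*s)^3 := pow_nonneg hts 3
    linarith [hts, h3, mul_nonneg hts (sq_nonneg s), mul_nonneg hts (sq_nonneg t),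
      mul_nonneg hts (sq_nonneg (s*s)), mul_nonneg h3 (sq_nonneg s),
      mul_nonneg h3 (sq_nonneg t), mul_nonneg hts (sq_nonneg (s*s*s)),
      sq_nonneg s, sq_nonneg t, sq_nonneg (s*s), sq_nonneg (t*s), sq_nonneg (s*s*s),
      sq_nonneg (t*s*s), sq_nonneg (t*t*s), sq_nonneg (s*s*s*s), sq_nonneg (t*s*s*s),
      sq_nonneg (t*t*s*s)]
  · rcases le_or_gt 0 s with h | h
    · have htneg : t ≤ 0 := by
        by_contra hc
        push_neg at hc
        exact absurd (mul_nonneg hc.le h) (by linarith)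
      have := Qneg (r := -t) (s := s) (by linarith) (by linarith) h hs'
      linarith [this]
    · have htpos : 0 ≤ t := by
        by_contra hc
        push_neg at hc
        nlinarith
      have := Qneg (r := t) (s := -s) htpos ht' (by linarith) (by linarith)
      nlinarith [this]

lemma xlog_bound' {X m : ℝ} (hX : 0 ≤ X) (hm : 0 < m) :
    (2*(m^2*(m+2*X))) * (X * Real.log X - X * Real.log m) ≤
      2*X*(X-m)*m*(m+2*X) - X*(X-m)^2*(m+2*X) + 2*X*(X-m)^3 := by
  have hmX : (0:ℝ) < m + 2*X := by linarith
  have h := mul_le_mul_of_nonneg_left (xlog_bound hX hm) (by positivity :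
    (0:ℝ) ≤ 2*(m^2*(m+2*X)))
  refine h.trans (le_of_eq ?_)
  field_simp

theorem stmt5 (p s : ℝ) (hp : p ∈ Set.Ioo (0:ℝ) 1) (hs : s ∈ Set.Icc (-1:ℝ) 1) :
    p * (1+s)^2 * Real.log ((1+s)^2) + (1-p) * (1-s)^2 * Real.log ((1-s)^2)
      - (p * (1+s)^2 + (1-p) * (1-s)^2) * Real.log (p * (1+s)^2 + (1-p) * (1-s)^2)
      ≤ 2 * s^2 := by
  obtain ⟨hp0, hp1⟩ := hp
  obtain ⟨hs0, hs1⟩ := hs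
  have hq0 : 0 < 1 - p := by linarith
  set a : ℝ := (1+s)^2 with ha_def
  set b : ℝ := (1-s)^2 with hb_def
  set m : ℝ := p * a + (1-p) * b with hm_def
  have ha : 0 ≤ a := sq_nonneg _
  have hb : 0 ≤ b := sq_nonneg _
  have hm : 0 < m := by
    rw [hm_def, ha_def, hb_def]
    nlinarith [mul_pos hp0 hq0, sq_nonneg (1+s), sq_nonneg (1-s), sq_nonneg s,
      mul_nonneg hp0.le (sq_nonneg (1+s)), mul_nonneg hq0.le (sq_nonneg (1-s))]
  have hma : 0 < m + 2*a := by linarith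
  have hmb : 0 < m + 2*b := by linarith
  have hc1 : 0 < 2*(m^2*(m+2*a)) := by positivity
  have hc2 : 0 < 2*(m^2*(m+2*b)) := by positivity
  have h1 := xlog_bound' ha hm
  have h2 := xlog_bound' hb hm
  -- multiply h1 by p*c2, h2 by (1-p)*c1
  have h1' := mul_le_mul_of_nonneg_left h1 (by positivity : (0:ℝ) ≤ p*(2*(m^2*(m+2*b))))
  have h2' := mul_le_mul_of_nonneg_left h2 (by positivity : (0:ℝ) ≤ (1-p)*(2*(m^2*(m+2*a))))
  have hQ := Qt_nonneg (t := 2*p-1) (s := s) (by linarith) (by linarith) hs0 hs1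
  -- the key polynomial inequality
  have hpoly : p*(2*(m^2*(m+2*b))) * (2*a*(a-m)*m*(m+2*a) - a*(a-m)^2*(m+2*a) + 2*a*(a-m)^3)
      + (1-p)*(2*(m^2*(m+2*a))) * (2*b*(b-m)*m*(m+2*b) - b*(b-m)^2*(m+2*b) + 2*b*(b-m)^3)
      ≤ 2*s^2 * ((2*(m^2*(m+2*a))) * (2*(m^2*(m+2*b)))) := by
    rw [← sub_nonneg]
    have hid : 2*s^2 * ((2*(m^2*(m+2*a))) * (2*(m^2*(m+2*b))))
        - (p*(2*(m^2*(m+2*b))) * (2*a*(a-m)*m*(m+2*a) - a*(a-m)^2*(m+2*a) + 2*a*(a-m)^3)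
        + (1-p)*(2*(m^2*(m+2*a))) * (2*b*(b-m)*m*(m+2*b) - b*(b-m)^2*(m+2*b) + 2*b*(b-m)^3))
        = s^2 * (4*m^2) * (2*s^2 + 12*(2*p-1)*s + 18*(2*p-1)^2 + 6*s^4 + 24*(2*p-1)*s^3
          + 78*(2*p-1)^2*s^2 + 84*(2*p-1)^3*s
          + 22*s^6 + 76*(2*p-1)*s^5 + 126*(2*p-1)^2*s^4 + 184*(2*p-1)^3*s^3 + 136*(2*p-1)^4*s^2
          + 18*s^8 + 96*(2*p-1)*s^7 + 194*(2*p-1)^2*s^6 + 212*(2*p-1)^3*s^5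
          + 168*(2*p-1)^4*s^4 + 80*(2*p-1)^5*s^3) := by
      rw [ha_def, hb_def, hm_def, ha_def, hb_def]
      ring
    rw [hid]
    exact mul_nonneg (mul_nonneg (sq_nonneg s) (by positivity)) hQ
  -- combine
  have hcomb : ((2*(m^2*(m+2*a))) * (2*(m^2*(m+2*b)))) *
      (p * (a * Real.log a - a * Real.log m) + (1-p) * (b * Real.log b - b * Real.log m))
      ≤ 2*s^2 * ((2*(m^2*(m+2*a))) * (2*(m^2*(m+2*b)))) := by
    calc ((2*(m^2*(m+2*a))) * (2*(m^2*(m+2*b)))) *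
        (p * (a * Real.log a - a * Real.log m) + (1-p) * (b * Real.log b - b * Real.log m))
        = p*(2*(m^2*(m+2*b))) * ((2*(m^2*(m+2*a))) * (a * Real.log a - a * Real.log m))
          + (1-p)*(2*(m^2*(m+2*a))) * ((2*(m^2*(m+2*b))) * (b * Real.log b - b * Real.log m)) := by
          ring
      _ ≤ _ := le_trans (add_le_add h1' h2') hpoly
  have hmain : p * (a * Real.log a - a * Real.log m) + (1-p) * (b * Real.log b - b * Real.log m)
      ≤ 2*s^2 := by
    have hcc : 0 < (2*(m^2*(m+2*a))) * (2*(m^2*(m+2*b))) := mul_pos hc1 hc2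
    have := (mul_le_mul_iff_right₀ hcc).mp (by
      calc ((2*(m^2*(m+2*a))) * (2*(m^2*(m+2*b)))) *
          (p * (a * Real.log a - a * Real.log m) + (1-p) * (b * Real.log b - b * Real.log m))
          ≤ 2*s^2 * ((2*(m^2*(m+2*a))) * (2*(m^2*(m+2*b)))) := hcomb
        _ = ((2*(m^2*(m+2*a))) * (2*(m^2*(m+2*b)))) * (2*s^2) := by ring)
    exact this
  calc p * (1+s)^2 * Real.log ((1+s)^2) + (1-p) * (1-s)^2 * Real.log ((1-s)^2)
      - (p * (1+s)^2 + (1-p) * (1-s)^2) * Real.log (p * (1+s)^2 + (1-p) * (1-s)^2)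
      = p * (a * Real.log a - a * Real.log m) + (1-p) * (b * Real.log b - b * Real.log m) := by
        rw [ha_def, hb_def, hm_def, ha_def, hb_def]; ring
    _ ≤ 2*s^2 := hmain
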